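/- (Regret of the base algorithm.) Let ε > 0, α > 1/2, let (h_t)_{t≥1} be a positive nondecreasing real sequence, and set k_t = 2·h_t and z_t = ((12α + 4)/(2α − 1))·h_t². Let (l̃_t)_{t≥1} be a real sequence such that |l̃_t| ≤ h_t and ∑_{i=1}^t l̃_i ≤ h_t for all t ≥ 1. Define Ṽ_t = ∑_{i=1}^t l̃_i², S̃_t = −∑_{i=1}^t l̃_i (with Ṽ_0 = S̃_0 = 0), and ỹ_t = D_t(Ṽ_{t−1}, S̃_{t−1}) where D_t(V, S) = ε·erfi(S/√(4·α·(V + z_t + k_t·S))) − (ε·k_t·√α/(2·√(V + z_t + k_t·S)))·exp(S²/(4·α·(V + z_t + k_t·S))). Then for every T ≥ 1 and every ũ ≥ 0: ∑_{t=1}^T l̃_t·(ỹ_t − ũ) ≤ ε·√(α·(Ṽ_T + z_T + k_T·S̄)) + ũ·S̄, where S̄ = 4·α·k_T·(1 + √(log(2·ũ/ε + 1)))² + √(4·α·(Ṽ_T + z_T))·(1 + √(log(2·ũ/ε + 1))). -/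

import Mathlib

/-- The imaginary error function, `erfi x = ∫ u in 0..x, exp (u²)`
(the conventional erfi scaled by `√π / 2`). -/
noncomputable def erfi (x : ℝ) : ℝ := ∫ u in (0:ℝ)..x, Real.exp (u ^ 2)

noncomputable def Ferfi (x : ℝ) : ℝ := ∫ u in (0:ℝ)..x, erfi u

lemma hasDerivAt_erfi (x : ℝ) : HasDerivAt erfi (Real.exp (x ^ 2)) x := by
  have hc : Continuous (fun u : ℝ => Real.exp (u ^ 2)) := by continuity
  exact intervalIntegral.integral_hasDerivAt_right (hc.intervalIntegrable _ _)
    (hc.stronglyMeasurableAtFilter _ _) hc.continuousAt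

lemma continuous_erfi : Continuous erfi :=
  continuous_iff_continuousAt.2 fun x => (hasDerivAt_erfi x).continuousAt

lemma hasDerivAt_Ferfi (x : ℝ) : HasDerivAt Ferfi (erfi x) x :=
  intervalIntegral.integral_hasDerivAt_right (continuous_erfi.intervalIntegrable _ _)
    (continuous_erfi.stronglyMeasurableAtFilter _ _) continuous_erfi.continuousAt

lemma erfi_zero : erfi 0 = 0 := intervalIntegral.integral_same

lemma Ferfi_zero : Ferfi 0 = 0 := intervalIntegral.integral_same

lemma erfi_monotone : Monotone erfi := by
  have : ∀ x, 0 ≤ deriv erfi x := fun x => by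
    rw [(hasDerivAt_erfi x).deriv]; positivity
  exact monotone_of_deriv_nonneg (fun x => (hasDerivAt_erfi x).differentiableAt) this

lemma erfi_nonneg {x : ℝ} (hx : 0 ≤ x) : 0 ≤ erfi x := by
  rw [← erfi_zero]; exact erfi_monotone hx

lemma erfi_nonpos {x : ℝ} (hx : x ≤ 0) : erfi x ≤ 0 := by
  rw [← erfi_zero]; exact erfi_monotone hx

lemma Ferfi_nonneg (x : ℝ) : 0 ≤ Ferfi x := by
  rcases le_or_gt 0 x with hx | hx
  · exact intervalIntegral.integral_nonneg hx (fun u hu => erfi_nonneg hu.1)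
  · rw [Ferfi, intervalIntegral.integral_symm x 0, ← intervalIntegral.integral_neg]
    exact intervalIntegral.integral_nonneg hx.le (fun u hu => neg_nonneg.2 (erfi_nonpos hu.2))

/-- Key identity: `2·∫₀^θ erfi = 2·θ·erfi θ − exp (θ²) + 1`. -/
lemma Ferfi_identity (θ : ℝ) : 2 * Ferfi θ = 2 * θ * erfi θ - Real.exp (θ ^ 2) + 1 := by
  have key : ∀ x : ℝ, HasDerivAt
      (fun θ => 2 * Ferfi θ - (2 * θ * erfi θ - Real.exp (θ ^ 2) + 1)) 0 x := by
    intro x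
    have h1 : HasDerivAt (fun θ : ℝ => 2 * Ferfi θ) (2 * erfi x) x :=
      (hasDerivAt_Ferfi x).const_mul 2
    have h2 : HasDerivAt (fun θ : ℝ => 2 * θ * erfi θ)
        (2 * erfi x + 2 * x * Real.exp (x ^ 2)) x := by
      have h2' := ((hasDerivAt_id x).const_mul 2).mul (hasDerivAt_erfi x)
      simp only [id_eq] at h2'
      exact h2'.congr_deriv (by ring)
    have h3 : HasDerivAt (fun θ : ℝ => Real.exp (θ ^ 2)) (Real.exp (x ^ 2) * (2 * x)) x := by
      have hp : HasDerivAt (fun θ : ℝ => θ ^ 2) (2 * x) x := by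
        simpa using hasDerivAt_pow 2 x
      exact (Real.hasDerivAt_exp _).comp x hp
    have := h1.sub ((h2.sub h3).add_const 1)
    exact this.congr_deriv (by ring)
  have hconst := is_const_of_deriv_eq_zero
    (fun x => (key x).differentiableAt) (fun x => (key x).deriv) θ 0
  norm_num [Ferfi_zero, erfi_zero, Real.exp_zero] at hconst
  linarith [hconst]

/-- `D(V, S)`, the partial derivative in `S` of the shifted potential
`Φ(V, S) = φ(V + z + k·S, S)`. -/
noncomputable def Dfun (ε α k z V S : ℝ) : ℝ :=
  ε * erfi (S / Real.sqrt (4 * α * (V + z + k * S))) -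
    ε * k * Real.sqrt α / (2 * Real.sqrt (V + z + k * S)) *
      Real.exp (S ^ 2 / (4 * α * (V + z + k * S)))


set_option maxHeartbeats 1000000 in
lemma key_poly (α h s S V z x y : ℝ) (hα : 1/2 < α) (hh : 0 < h)
    (hs1 : -h ≤ s) (hs2 : s ≤ h) (hS : -h ≤ S) (hV : 0 ≤ V)
    (hzz : (2*α-1)*z = (12*α+4)*h^2)
    (hyy : y = S - s)
    (hxx : x = V + z + 2*h*y + s^2) :
    (2*s-2*h)^2*(α*x + y^2/2) + 2*(2*s-2*h)*x*y - (4*α-2)*x^2 ≤ 0 := by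
  have ha1 : (0:ℝ) < 2*α-1 := by linarith
  have hy2 : -(h+s) ≤ y := by rw [hyy]; linarith
  have hzpos : 0 < z := by nlinarith [mul_pos hh hh]
  have hxz : z + 2*h*y ≤ x := by nlinarith [sq_nonneg s]
  have hz4 : 2*h^2 ≤ z - 4*h^2 := by nlinarith [mul_pos hh hh]
  have hxpos : 0 < x := by nlinarith [mul_pos hh hh]
  rcases le_or_gt 0 y with hy0 | hy0
  · -- y ≥ 0 case
    have hb : 0 ≤ 2*h - 2*s := by linarith
    have hw : (2*h-2*s)*y ≤ 2*x := by nlinarith [mul_le_mul_of_nonneg_right (by linarith : 2*h-2*s ≤ 4*h) hy0]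
    have h1 : (2*s-2*h)^2*(y^2/2) + 2*(2*s-2*h)*x*y ≤ 0 := by
      nlinarith [mul_le_mul_of_nonneg_left hw (mul_nonneg hb hy0)]
    have hxz2 : z ≤ x := by nlinarith [mul_nonneg (mul_nonneg hh.le hh.le) hy0, mul_nonneg hh.le hy0]
    have hbb : (2*s-2*h)^2 ≤ 16*h^2 := by nlinarith
    have h16 : 16*α*h^2 ≤ (4*α-2)*z := by nlinarith
    have e1 : (2*s-2*h)^2*(α*x) ≤ 16*h^2*(α*x) :=
      mul_le_mul_of_nonneg_right hbb (mul_nonneg (by linarith) hxpos.le)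
    have e2 : 16*α*h^2*x ≤ ((4*α-2)*z)*x := mul_le_mul_of_nonneg_right h16 hxpos.le
    have e3 : (4*α-2)*z*x ≤ (4*α-2)*(x*x) := by
      have := mul_le_mul_of_nonneg_left hxz2 (mul_nonneg (by linarith : (0:ℝ) ≤ 4*α-2) hxpos.le)
      nlinarith [this]
    have h2 : (2*s-2*h)^2*(α*x) ≤ (4*α-2)*x^2 := by nlinarith [e1, e2, e3]
    linarith [h1, h2]
  · -- y < 0 case
    obtain ⟨b, hbdef⟩ : ∃ b, b = 2*h - 2*s := ⟨_, rfl⟩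
    obtain ⟨μ, hmudef⟩ : ∃ μ, μ = -y := ⟨_, rfl⟩
    have hb : 0 ≤ b := by simp only [hbdef]; linarith
    have hμ : 0 < μ := by simp only [hmudef]; linarith
    have hμ1 : μ ≤ h + s := by simp only [hmudef]; linarith
    have hμ2 : μ ≤ 2*h := by linarith
    have f1 : b*μ ≤ 2*h^2 := by nlinarith [mul_le_mul_of_nonneg_left hμ1 hb]
    have f2 : b ≤ 4*h - 2*μ := by simp only [hbdef]; linarith
    have f3 : z - 2*h*μ ≤ x := by nlinarith [mul_nonneg hh.le hμ.le]
    have f3' : z - 4*h^2 ≤ x := by nlinarith [mul_nonneg hh.le (by linarith : 0 ≤ 2*h - μ)]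
    have g4 : 2*h^4 ≤ h^2 * x := by nlinarith [mul_le_mul_of_nonneg_left (le_trans hz4 f3') (le_of_lt (mul_pos hh hh))]
    have g3 : (2*s-2*h)^2*(μ^2/2) ≤ 2*h^4 := by
      have e : (2*s-2*h)^2*(μ^2/2) = (b*μ)^2/2 := by simp only [hbdef]; ring
      have e2 : (b*μ)^2 ≤ (2*h^2)^2 := by
        apply pow_le_pow_left₀ (mul_nonneg hb hμ.le) f1
      rw [e]
      calc (b*μ)^2/2 ≤ (2*h^2)^2/2 := by linarith
        _ = 2*h^4 := by ring
    have g5 : 2*(2*s-2*h)*x*y ≤ 4*h^2*x := by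
      have e : 2*(2*s-2*h)*x*y = 2*((b*μ)*x) := by simp only [hbdef, hmudef]; ring
      rw [e]
      nlinarith [mul_le_mul_of_nonneg_right f1 hxpos.le]
    have g1 : (2*s-2*h)^2*(α*x) ≤ α*(4*h-2*μ)^2*x := by
      have hb2 : (2*s-2*h)^2 ≤ (4*h-2*μ)^2 := by nlinarith
      nlinarith [mul_le_mul_of_nonneg_right hb2 (mul_nonneg (by linarith : (0:ℝ) ≤ α) hxpos.le)]
    have g2s : α*(4*h-2*μ)^2 + 5*h^2 ≤ (4*α-2)*x := by
      have key : α*(4*h-2*μ)^2 + 5*h^2 ≤ (4*α-2)*(z-2*h*μ) := by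
        nlinarith [mul_nonneg hμ.le (by linarith : 0 ≤ 2*h - μ), mul_nonneg hh.le hμ.le]
      calc α*(4*h-2*μ)^2 + 5*h^2 ≤ (4*α-2)*(z-2*h*μ) := key
        _ ≤ (4*α-2)*x := mul_le_mul_of_nonneg_left f3 (by linarith)
    have g2 : α*(4*h-2*μ)^2*x + 5*h^2*x ≤ (4*α-2)*x^2 := by
      nlinarith [mul_le_mul_of_nonneg_right g2s hxpos.le]
    have hy2' : y^2 = μ^2 := by simp only [hmudef]; ring
    nlinarith [g1, g2, g3, g4, g5, hy2']

/-- Helper: compare endpoint values from `HasDerivAt` with nonneg derivative. -/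
lemma le_of_hasDerivAt_nonneg {g g' : ℝ → ℝ} {a b : ℝ} (hab : a ≤ b)
    (hd : ∀ t ∈ Set.Icc a b, HasDerivAt g (g' t) t)
    (hpos : ∀ t ∈ Set.Ioo a b, 0 ≤ g' t) : g a ≤ g b := by
  have hcont : ContinuousOn g (Set.Icc a b) :=
    fun t ht => (hd t ht).continuousAt.continuousWithinAt
  have hmono : MonotoneOn g (Set.Icc a b) := by
    apply monotoneOn_of_deriv_nonneg (convex_Icc a b) hcont
    · intro t ht
      rw [interior_Icc] at ht
      exact (hd t (Set.mem_Icc_of_Ioo ht)).differentiableAt.differentiableWithinAt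
    · intro t ht
      rw [interior_Icc] at ht
      rw [(hd t (Set.mem_Icc_of_Ioo ht)).deriv]
      exact hpos t ht
  exact hmono (Set.left_mem_Icc.2 hab) (Set.right_mem_Icc.2 hab) hab

lemma le_of_hasDerivAt_nonpos {g g' : ℝ → ℝ} {a b : ℝ} (hab : a ≤ b)
    (hd : ∀ t ∈ Set.Icc a b, HasDerivAt g (g' t) t)
    (hneg : ∀ t ∈ Set.Ioo a b, g' t ≤ 0) : g b ≤ g a := by
  have := le_of_hasDerivAt_nonneg (g := fun t => -g t) (g' := fun t => -g' t) hab
    (fun t ht => (hd t ht).neg) (fun t ht => neg_nonneg.2 (hneg t ht))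
  linarith

lemma erfi_one_ge : (43:ℝ)/30 ≤ erfi 1 := by
  have hle : ∀ u ∈ Set.Icc (0:ℝ) 1, 1 + u^2 + (u^2)^2/2 ≤ Real.exp (u^2) :=
    fun u _ => Real.quadratic_le_exp_of_nonneg (by positivity)
  have h1 : (∫ u in (0:ℝ)..1, (1 + u^2 + (u^2)^2/2)) ≤ ∫ u in (0:ℝ)..1, Real.exp (u^2) := by
    apply intervalIntegral.integral_mono_on zero_le_one
    · exact (by continuity : Continuous fun u:ℝ => 1 + u^2 + (u^2)^2/2).intervalIntegrable _ _
    · exact (by continuity : Continuous fun u:ℝ => Real.exp (u^2)).intervalIntegrable _ _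
    · exact hle
  have h2 : (∫ u in (0:ℝ)..1, (1 + u^2 + (u^2)^2/2)) = 43/30 := by
    have e0 : (fun u:ℝ => 1 + u^2 + (u^2)^2/2) = fun u:ℝ => 1 + u^2 + (1/2) * u^4 := by
      funext u; ring
    rw [e0]
    have i1 : (∫ u in (0:ℝ)..1, (1 + u^2 + (1/2) * u^4)) =
        (∫ u in (0:ℝ)..1, (1 + u^2 : ℝ)) + (∫ u in (0:ℝ)..1, (1/2) * u^4) := by
      rw [← intervalIntegral.integral_add]
      · exact (by continuity : Continuous fun u:ℝ => 1 + u^2).intervalIntegrable _ _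
      · exact (by continuity : Continuous fun u:ℝ => (1/2) * u^4).intervalIntegrable _ _
    have i2 : (∫ u in (0:ℝ)..1, (1 + u^2 : ℝ)) =
        (∫ u in (0:ℝ)..1, (1:ℝ)) + (∫ u in (0:ℝ)..1, u^2) := by
      rw [← intervalIntegral.integral_add]
      · exact continuous_const.intervalIntegrable _ _
      · exact (by continuity : Continuous fun u:ℝ => u^2).intervalIntegrable _ _
    rw [i1, i2, intervalIntegral.integral_const_mul, integral_pow, integral_pow]
    norm_num
  calc (43:ℝ)/30 = ∫ u in (0:ℝ)..1, (1 + u^2 + (u^2)^2/2) := h2.symm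
    _ ≤ erfi 1 := h1

/-- `erfi θ ≥ exp (θ²) / (2θ)` for `θ ≥ 1`. -/
lemma erfi_ge_exp_div {θ : ℝ} (hθ : 1 ≤ θ) : Real.exp (θ^2) / (2*θ) ≤ erfi θ := by
  have key : (fun t => erfi t - Real.exp (t^2) / (2*t)) 1 ≤
      (fun t => erfi t - Real.exp (t^2) / (2*t)) θ := by
    apply le_of_hasDerivAt_nonneg (g := fun t => erfi t - Real.exp (t^2) / (2*t))
      (g' := fun t => Real.exp (t^2) / (2*t^2)) hθ
    · intro t ht
      have htpos : (0:ℝ) < t := lt_of_lt_of_le one_pos ht.1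
      have h1 : HasDerivAt (fun t : ℝ => Real.exp (t^2)) (Real.exp (t^2) * (2*t)) t := by
        have hp : HasDerivAt (fun s : ℝ => s ^ 2) (2*t) t := by simpa using hasDerivAt_pow 2 t
        exact (Real.hasDerivAt_exp _).comp t hp
      have h2 : HasDerivAt (fun t : ℝ => 2*t) 2 t := by
        simpa using (hasDerivAt_id t).const_mul 2
      have h3 : HasDerivAt (fun t : ℝ => Real.exp (t^2) / (2*t))
          ((Real.exp (t^2) * (2*t) * (2*t) - Real.exp (t^2) * 2) / (2*t)^2) t :=
        h1.div h2 (by positivity)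
      have h4 := (hasDerivAt_erfi t).sub h3
      refine h4.congr_deriv (Eq.symm ?_)
      field_simp
      ring
    · intro t ht
      have htpos : (0:ℝ) < t := lt_of_lt_of_le one_pos ht.1.le
      positivity
  simp only at key
  have h30 : Real.exp (1^2) / (2*1) ≤ 43/30 := by
    have := Real.exp_one_lt_d9
    norm_num
    linarith
  have := erfi_one_ge
  linarith

/-- `erfi (b+1) ≥ exp (b²)` for `b ≥ 0`. -/
lemma erfi_succ_ge {b : ℝ} (hb : 0 ≤ b) : Real.exp (b^2) ≤ erfi (b+1) := by
  have hsplit : erfi (b+1) = erfi b + ∫ u in b..(b+1), Real.exp (u^2) := by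
    rw [erfi, erfi, ← intervalIntegral.integral_add_adjacent_intervals
      ((by continuity : Continuous fun u:ℝ => Real.exp (u^2)).intervalIntegrable 0 b)
      ((by continuity : Continuous fun u:ℝ => Real.exp (u^2)).intervalIntegrable b (b+1))]
  have hmono : (∫ u in b..(b+1), (Real.exp (b^2) : ℝ)) ≤ ∫ u in b..(b+1), Real.exp (u^2) := by
    apply intervalIntegral.integral_mono_on (by linarith)
    · exact continuous_const.intervalIntegrable _ _
    · exact (by continuity : Continuous fun u:ℝ => Real.exp (u^2)).intervalIntegrable _ _
    · intro u hu
      apply Real.exp_le_exp.2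
      nlinarith [hu.1, hu.2]
  rw [intervalIntegral.integral_const] at hmono
  simp at hmono
  have := erfi_nonneg hb
  linarith [hsplit, hmono, this]

/-- General chain rule for the potential `t ↦ ε·√(α·X t)·(2·F(Y t/(2√(α·X t))) − 1)`. -/
lemma hasDerivAt_potential {X Y : ℝ → ℝ} {X' Y' c α ε : ℝ} (hα : 0 < α)
    (hX : HasDerivAt X X' c) (hXpos : 0 < X c) (hY : HasDerivAt Y Y' c) :
    HasDerivAt (fun t => ε * Real.sqrt (α * X t) * (2 * Ferfi (Y t / (2 * Real.sqrt (α * X t))) - 1))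
      (-(ε * α * X' * Real.exp ((Y c / (2 * Real.sqrt (α * X c)))^2) / (2 * Real.sqrt (α * X c)))
        + ε * Y' * erfi (Y c / (2 * Real.sqrt (α * X c)))) c := by
  have hrpos : 0 < Real.sqrt (α * X c) := Real.sqrt_pos.2 (by positivity)
  have hr : HasDerivAt (fun t => Real.sqrt (α * X t)) (α * X' / (2 * Real.sqrt (α * X c))) c := by
    have h1 : HasDerivAt (fun t => α * X t) (α * X') c := hX.const_mul α
    exact h1.sqrt (by positivity)
  have hθ : HasDerivAt (fun t => Y t / (2 * Real.sqrt (α * X t)))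
      ((Y' * (2 * Real.sqrt (α * X c)) - Y c * (2 * (α * X' / (2 * Real.sqrt (α * X c)))))
        / (2 * Real.sqrt (α * X c))^2) c := by
    exact hY.div (hr.const_mul 2) (by positivity)
  have hF : HasDerivAt (fun t => Ferfi (Y t / (2 * Real.sqrt (α * X t))))
      (erfi (Y c / (2 * Real.sqrt (α * X c))) *
        ((Y' * (2 * Real.sqrt (α * X c)) - Y c * (2 * (α * X' / (2 * Real.sqrt (α * X c)))))
        / (2 * Real.sqrt (α * X c))^2)) c :=
    (hasDerivAt_Ferfi _).comp c hθ
  have hmain := ((hr.const_mul ε).mul ((hF.const_mul 2).sub_const 1))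
  refine hmain.congr_deriv (Eq.symm ?_)
  have hr2 : (Real.sqrt (α * X c))^2 = α * X c := Real.sq_sqrt (by positivity)
  set r := Real.sqrt (α * X c) with hrdef
  have hrne : r ≠ 0 := ne_of_gt hrpos
  have hid2 : 2 * r * Ferfi (Y c / (2 * r)) =
      Y c * erfi (Y c / (2 * r)) - r * Real.exp ((Y c / (2 * r)) ^ 2) + r := by
    rw [show (2:ℝ) * r * Ferfi (Y c / (2 * r)) = r * (2 * Ferfi (Y c / (2 * r))) from by ring,
      Ferfi_identity]
    field_simp
  simp only [div_pow] at hid2 ⊢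
  field_simp
  rw [mul_pow] at hid2
  linear_combination (-ε * α * X') * hid2

section OneStepDeriv

variable (ε α k A S : ℝ)

/-- First derivative of the one-step potential path. -/
lemma hasDerivAt_Psi (hα : 0 < α) (c : ℝ) (hXc : 0 < A + k*(S-c) + c^2) :
    HasDerivAt (fun t => ε * Real.sqrt (α * (A + k*(S-t) + t^2)) *
        (2 * Ferfi ((S-t) / (2 * Real.sqrt (α * (A + k*(S-t) + t^2)))) - 1))
      (-(ε * α * (2*c-k) * Real.exp (((S-c) / (2 * Real.sqrt (α * (A + k*(S-c) + c^2))))^2)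
          / (2 * Real.sqrt (α * (A + k*(S-c) + c^2))))
        + ε * (-1) * erfi ((S-c) / (2 * Real.sqrt (α * (A + k*(S-c) + c^2))))) c := by
  have hY : HasDerivAt (fun t : ℝ => S - t) (-1) c := by
    simpa using (hasDerivAt_id c).const_sub S
  have hX : HasDerivAt (fun t : ℝ => A + k*(S-t) + t^2) (2*c-k) c := by
    have h1 : HasDerivAt (fun t : ℝ => k * (S - t)) (k * (-1)) c := hY.const_mul k
    have h2 : HasDerivAt (fun t : ℝ => t ^ 2) (2*c) c := by simpa using hasDerivAt_pow 2 c
    have h12 := (h1.add h2).const_add A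
    have hfun : (fun t : ℝ => A + k*(S-t) + t^2) = (fun x : ℝ => A + (k * (S - x) + x ^ 2)) := by
      funext t; ring
    rw [hfun]
    refine h12.congr_deriv (Eq.symm ?_)
    ring
  exact hasDerivAt_potential hα hX hXc hY

/-- Second derivative of the one-step potential path. -/
lemma hasDerivAt_D1 (hα : 0 < α) (hε : 0 < ε) (c : ℝ) (hXc : 0 < A + k*(S-c) + c^2) :
    HasDerivAt (fun t => -(ε * α * (2*t-k) * Real.exp (((S-t) / (2 * Real.sqrt (α * (A + k*(S-t) + t^2))))^2)
          / (2 * Real.sqrt (α * (A + k*(S-t) + t^2))))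
        + ε * (-1) * erfi ((S-t) / (2 * Real.sqrt (α * (A + k*(S-t) + t^2)))))
      (ε * Real.exp (((S-c) / (2 * Real.sqrt (α * (A + k*(S-c) + c^2))))^2) *
          ((2*c-k)^2*(α*(A + k*(S-c) + c^2) + (S-c)^2/2)
            + 2*(2*c-k)*(A + k*(S-c) + c^2)*(S-c)
            - (4*α-2)*(A + k*(S-c) + c^2)^2)
        / (4 * (A + k*(S-c) + c^2)^2 * Real.sqrt (α * (A + k*(S-c) + c^2)))) c := by
  have hY : HasDerivAt (fun t : ℝ => S - t) (-1) c := by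
    simpa using (hasDerivAt_id c).const_sub S
  have hX : HasDerivAt (fun t : ℝ => A + k*(S-t) + t^2) (2*c-k) c := by
    have h1 : HasDerivAt (fun t : ℝ => k * (S - t)) (k * (-1)) c := hY.const_mul k
    have h2 : HasDerivAt (fun t : ℝ => t ^ 2) (2*c) c := by simpa using hasDerivAt_pow 2 c
    have h12 := (h1.add h2).const_add A
    have hfun : (fun t : ℝ => A + k*(S-t) + t^2) = (fun x : ℝ => A + (k * (S - x) + x ^ 2)) := by
      funext t; ring
    rw [hfun]
    refine h12.congr_deriv (Eq.symm ?_)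
    ring
  have hrpos : 0 < Real.sqrt (α * (A + k*(S-c) + c^2)) := Real.sqrt_pos.2 (by positivity)
  have hrr : HasDerivAt (fun t => Real.sqrt (α * (A + k*(S-t) + t^2)))
      (α * (2*c-k) / (2 * Real.sqrt (α * (A + k*(S-c) + c^2)))) c :=
    (hX.const_mul α).sqrt (by positivity)
  have hth : HasDerivAt (fun t => (S-t) / (2 * Real.sqrt (α * (A + k*(S-t) + t^2))))
      (((-1) * (2 * Real.sqrt (α * (A + k*(S-c) + c^2)))
          - (S-c) * (2 * (α * (2*c-k) / (2 * Real.sqrt (α * (A + k*(S-c) + c^2))))))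
        / (2 * Real.sqrt (α * (A + k*(S-c) + c^2)))^2) c :=
    hY.div (hrr.const_mul 2) (by positivity)
  have hsq : HasDerivAt (fun t => ((S-t) / (2 * Real.sqrt (α * (A + k*(S-t) + t^2))))^2)
      (2 * ((S-c) / (2 * Real.sqrt (α * (A + k*(S-c) + c^2)))) *
        (((-1) * (2 * Real.sqrt (α * (A + k*(S-c) + c^2)))
          - (S-c) * (2 * (α * (2*c-k) / (2 * Real.sqrt (α * (A + k*(S-c) + c^2))))))
        / (2 * Real.sqrt (α * (A + k*(S-c) + c^2)))^2)) c := by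
    have := ((hasDerivAt_pow 2 ((S-c) / (2 * Real.sqrt (α * (A + k*(S-c) + c^2))))).comp c hth)
    exact this.congr_deriv (by ring)
  have hexp : HasDerivAt (fun t => Real.exp (((S-t) / (2 * Real.sqrt (α * (A + k*(S-t) + t^2))))^2))
      (Real.exp (((S-c) / (2 * Real.sqrt (α * (A + k*(S-c) + c^2))))^2) *
        (2 * ((S-c) / (2 * Real.sqrt (α * (A + k*(S-c) + c^2)))) *
        (((-1) * (2 * Real.sqrt (α * (A + k*(S-c) + c^2)))
          - (S-c) * (2 * (α * (2*c-k) / (2 * Real.sqrt (α * (A + k*(S-c) + c^2))))))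
        / (2 * Real.sqrt (α * (A + k*(S-c) + c^2)))^2))) c :=
    (Real.hasDerivAt_exp _).comp c hsq
  have hlin : HasDerivAt (fun t : ℝ => ε * α * (2*t-k)) (ε * α * 2) c := by
    have h0 : HasDerivAt (fun t : ℝ => 2*t-k) 2 c := by
      simpa using ((hasDerivAt_id c).const_mul 2).sub_const k
    have := h0.const_mul (ε * α)
    convert this using 2 <;> ring
  have hN := hlin.mul hexp
  have hT1 := (hN.div (hrr.const_mul 2) (by positivity)).neg
  have hT2 := ((hasDerivAt_erfi _).comp c hth).const_mul (ε * (-1))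
  have hmain := hT1.add hT2
  refine hmain.congr_deriv (Eq.symm ?_)
  simp only [Pi.mul_apply]
  have hr2 : (Real.sqrt (α * (A + k*(S-c) + c^2)))^2 = α * (A + k*(S-c) + c^2) :=
    Real.sq_sqrt (by positivity)
  set r := Real.sqrt (α * (A + k*(S-c) + c^2)) with hrdef
  have hrne : r ≠ 0 := ne_of_gt hrpos
  have hXeq : A + k*(S-c) + c^2 = r^2/α := by rw [hr2]; field_simp
  rw [hXeq]
  simp only [div_pow]
  field_simp
  ring

end OneStepDeriv

/-- Second-order Taylor bound for a function concave on `[-b, b]`. -/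
lemma concave_taylor {g g' g'' : ℝ → ℝ} {b c : ℝ}
    (hg : ∀ x, HasDerivAt g (g' x) x) (hg' : ∀ x, HasDerivAt g' (g'' x) x)
    (hcc : ∀ x ∈ Set.Icc (-b) b, g'' x ≤ 0) (hc : c ∈ Set.Icc (-b) b) :
    g c ≤ g 0 + c * g' 0 := by
  have hb0 : 0 ≤ b := by
    rcases hc with ⟨h1, h2⟩; linarith
  rcases le_or_gt 0 c with h0 | h0
  · have hq := le_of_hasDerivAt_nonneg (g := fun x => g 0 + x * g' 0 - g x)
      (g' := fun x => g' 0 - g' x) h0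
      (fun t _ => by
        have h1 : HasDerivAt (fun x : ℝ => g 0 + x * g' 0) (g' 0) t := by
          have := ((hasDerivAt_id t).mul_const (g' 0)).const_add (g 0)
          simpa using this
        exact h1.sub (hg t))
      (fun t ht => by
        have hmono : g' t ≤ g' 0 := by
          apply le_of_hasDerivAt_nonpos (g := g') (g' := g'') ht.1.le
            (fun u _ => hg' u)
          intro u hu
          exact hcc u ⟨by linarith [hu.1], by linarith [hu.2, ht.2, hc.2]⟩
        show (0:ℝ) ≤ g' 0 - g' t
        linarith)
    linarith
  · have hq := le_of_hasDerivAt_nonpos (g := fun x => g 0 + x * g' 0 - g x)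
      (g' := fun x => g' 0 - g' x) h0.le
      (fun t _ => by
        have h1 : HasDerivAt (fun x : ℝ => g 0 + x * g' 0) (g' 0) t := by
          have := ((hasDerivAt_id t).mul_const (g' 0)).const_add (g 0)
          simpa using this
        exact h1.sub (hg t))
      (fun t ht => by
        have hmono : g' 0 ≤ g' t := by
          apply le_of_hasDerivAt_nonpos (g := g') (g' := g'') ht.2.le
            (fun u _ => hg' u)
          intro u hu
          exact hcc u ⟨by linarith [hu.1, ht.1, hc.1], by linarith [hu.2]⟩
        show g' 0 - g' t ≤ 0
        linarith)
    linarith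

/-- One-step potential inequality (raw form). -/
lemma one_step_raw (ε α h k A S : ℝ) (hε : 0 < ε) (hα : 1/2 < α) (hh : 0 < h)
    (hk : k = 2*h) (hA : (12*α+4)/(2*α-1)*h^2 ≤ A) (hS : -h ≤ S)
    {c : ℝ} (hc : |c| ≤ h) :
    ε * Real.sqrt (α * (A + k*(S-c) + c^2)) *
        (2 * Ferfi ((S-c) / (2 * Real.sqrt (α * (A + k*(S-c) + c^2)))) - 1)
      ≤ ε * Real.sqrt (α * (A + k*(S-0) + 0^2)) *
          (2 * Ferfi ((S-0) / (2 * Real.sqrt (α * (A + k*(S-0) + 0^2)))) - 1)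
        + c * (-(ε * α * (2*0-k) * Real.exp (((S-0) / (2 * Real.sqrt (α * (A + k*(S-0) + 0^2))))^2)
            / (2 * Real.sqrt (α * (A + k*(S-0) + 0^2))))
          + ε * (-1) * erfi ((S-0) / (2 * Real.sqrt (α * (A + k*(S-0) + 0^2))))) := by
  have hα0 : 0 < α := by linarith
  have ha1 : (0:ℝ) < 2*α-1 := by linarith
  obtain ⟨z0, hz0⟩ : ∃ z0, z0 = (12*α+4)/(2*α-1)*h^2 := ⟨_, rfl⟩
  have hzz : (2*α-1)*z0 = (12*α+4)*h^2 := by rw [hz0]; field_simp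
  have hz0A : z0 ≤ A := hz0 ▸ hA
  have hXpos : ∀ t : ℝ, 0 < A + k*(S-t) + t^2 := by
    intro t
    have h3 : 3*h^2 < z0 := by nlinarith [mul_pos hh hh]
    rw [hk]
    nlinarith [sq_nonneg (t - h), mul_pos hh hh,
      mul_le_mul_of_nonneg_left hS (by linarith : (0:ℝ) ≤ 2*h)]
  have habs := abs_le.1 hc
  apply concave_taylor
    (g := fun t => ε * Real.sqrt (α * (A + k*(S-t) + t^2)) *
        (2 * Ferfi ((S-t) / (2 * Real.sqrt (α * (A + k*(S-t) + t^2)))) - 1))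
    (g' := fun t => -(ε * α * (2*t-k) * Real.exp (((S-t) / (2 * Real.sqrt (α * (A + k*(S-t) + t^2))))^2)
            / (2 * Real.sqrt (α * (A + k*(S-t) + t^2))))
          + ε * (-1) * erfi ((S-t) / (2 * Real.sqrt (α * (A + k*(S-t) + t^2)))))
    (g'' := fun t => ε * Real.exp (((S-t) / (2 * Real.sqrt (α * (A + k*(S-t) + t^2))))^2) *
          ((2*t-k)^2*(α*(A + k*(S-t) + t^2) + (S-t)^2/2)
            + 2*(2*t-k)*(A + k*(S-t) + t^2)*(S-t)
            - (4*α-2)*(A + k*(S-t) + t^2)^2)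
        / (4 * (A + k*(S-t) + t^2)^2 * Real.sqrt (α * (A + k*(S-t) + t^2))))
  · exact fun x => hasDerivAt_Psi ε α k A S hα0 x (hXpos x)
  · exact fun x => hasDerivAt_D1 ε α k A S hα0 hε x (hXpos x)
  · intro x hx
    have hP : (2*x-2*h)^2*(α*(A + k*(S-x) + x^2) + (S-x)^2/2)
        + 2*(2*x-2*h)*(A + k*(S-x) + x^2)*(S-x) - (4*α-2)*(A + k*(S-x) + x^2)^2 ≤ 0 := by
      apply key_poly α h x S (A - z0) z0 (A + k*(S-x) + x^2) (S-x) hα hh hx.1 hx.2 hS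
        (by linarith) hzz rfl (by rw [hk]; ring)
    have hknum : (2*x-k) = (2*x-2*h) := by rw [hk]
    rw [hknum]
    apply div_nonpos_of_nonpos_of_nonneg
    · apply mul_nonpos_of_nonneg_of_nonpos
      · positivity
      · exact hP
    · positivity
  · exact ⟨habs.1, habs.2⟩

lemma sqrt_four_alpha (α x : ℝ) (hα : 0 ≤ α) :
    Real.sqrt (4 * α * x) = 2 * Real.sqrt (α * x) := by
  rw [show (4:ℝ) * α * x = 4 * (α * x) by ring, show (4:ℝ) = 2^2 by norm_num,
    Real.sqrt_mul (by positivity) (α * x), Real.sqrt_sq (by norm_num)]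

lemma Dfun_eq (ε α k z V S : ℝ) (hα : 0 < α) (hx : 0 < V + z + k*S) :
    Dfun ε α k z V S =
      ε * erfi (S / (2 * Real.sqrt (α * (V + z + k*S))))
        - ε * k * α * Real.exp ((S / (2 * Real.sqrt (α * (V + z + k*S))))^2)
            / (2 * Real.sqrt (α * (V + z + k*S))) := by
  have hr2 : (Real.sqrt (α * (V + z + k*S)))^2 = α * (V + z + k*S) :=
    Real.sq_sqrt (by positivity)
  have hrpos : 0 < Real.sqrt (α * (V + z + k*S)) := Real.sqrt_pos.2 (by positivity)
  have hxs : 0 < Real.sqrt (V + z + k*S) := Real.sqrt_pos.2 hx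
  have hsa : Real.sqrt (α * (V + z + k*S)) = Real.sqrt α * Real.sqrt (V + z + k*S) :=
    Real.sqrt_mul hα.le _
  have hsqa : (Real.sqrt α)^2 = α := Real.sq_sqrt hα.le
  have hsqapos : 0 < Real.sqrt α := Real.sqrt_pos.2 hα
  rw [Dfun, sqrt_four_alpha α _ hα.le]
  have hargeq : S^2/(4*α*(V+z+k*S)) = (S/(2*Real.sqrt (α*(V+z+k*S))))^2 := by
    rw [div_pow, show (2*Real.sqrt (α*(V+z+k*S)))^2 = 4*(Real.sqrt (α*(V+z+k*S)))^2 by ring, hr2]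
    ring_nf
  rw [hargeq]
  congr 1
  rw [hsa, div_mul_eq_mul_div, div_eq_div_iff (by positivity) (by positivity)]
  linear_combination (2 * ε * k *
    Real.exp ((S / (2 * (Real.sqrt α * Real.sqrt (V+z+k*S))))^2) *
    Real.sqrt (V+z+k*S)) * hsqa

/-- Lower bound `φ ≥ -ε√(αx)`. -/
lemma phi_lower (ε α x y : ℝ) (hε : 0 ≤ ε) :
    -(ε * Real.sqrt (α * x)) ≤ ε * Real.sqrt (α * x) * (2 * Ferfi (y / (2 * Real.sqrt (α * x))) - 1) := by
  have h1 : -1 ≤ 2 * Ferfi (y / (2 * Real.sqrt (α * x))) - 1 := by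
    linarith [Ferfi_nonneg (y / (2 * Real.sqrt (α * x)))]
  nlinarith [mul_le_mul_of_nonneg_left h1 (mul_nonneg hε (Real.sqrt_nonneg (α * x)))]

/-- The potential is antitone in its first (variance) argument. -/
lemma phi_x_antitone (ε α y x₁ x₂ : ℝ) (hα : 0 < α) (hε : 0 ≤ ε)
    (h1 : 0 < x₁) (h12 : x₁ ≤ x₂) :
    ε * Real.sqrt (α * x₂) * (2 * Ferfi (y / (2 * Real.sqrt (α * x₂))) - 1)
      ≤ ε * Real.sqrt (α * x₁) * (2 * Ferfi (y / (2 * Real.sqrt (α * x₁))) - 1) := by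
  have := le_of_hasDerivAt_nonpos
    (g := fun x => ε * Real.sqrt (α * x) * (2 * Ferfi (y / (2 * Real.sqrt (α * x))) - 1))
    (g' := fun x => -(ε * α * 1 * Real.exp ((y / (2 * Real.sqrt (α * x)))^2) / (2 * Real.sqrt (α * x)))
      + ε * 0 * erfi (y / (2 * Real.sqrt (α * x)))) h12
    (fun t ht => hasDerivAt_potential hα (hasDerivAt_id t) (lt_of_lt_of_le h1 ht.1)
      (hasDerivAt_const t y))
    (fun t ht => by
      have htpos : 0 < t := lt_of_lt_of_le h1 ht.1.le
      have : 0 ≤ ε * α * 1 * Real.exp ((y / (2 * Real.sqrt (α * t)))^2) / (2 * Real.sqrt (α * t)) := by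
        have : 0 < Real.sqrt (α * t) := Real.sqrt_pos.2 (by positivity)
        positivity
      show -(ε * α * 1 * Real.exp ((y / (2 * Real.sqrt (α * t)))^2) / (2 * Real.sqrt (α * t)))
        + ε * 0 * erfi (y / (2 * Real.sqrt (α * t))) ≤ 0
      linarith)
  simpa using this

set_option maxHeartbeats 1000000 in
lemma conjugate_bound (ε α k u x0 ST : ℝ) (hε : 0 < ε) (hα : 0 < α) (hk : 0 ≤ k)
    (hx0 : 0 < x0) (hxT : 0 < x0 + k*ST) (hu : 0 ≤ u) :
    u * ST - ε * Real.sqrt (α * (x0 + k*ST)) *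
        (2 * Ferfi (ST/(2*Real.sqrt (α * (x0 + k*ST)))) - 1)
      ≤ ε * Real.sqrt (α * (x0 + k *
            (4*α*k*(1 + Real.sqrt (Real.log (2*u/ε+1)))^2
              + Real.sqrt (4*α*x0)*(1 + Real.sqrt (Real.log (2*u/ε+1))))))
        + u * (4*α*k*(1 + Real.sqrt (Real.log (2*u/ε+1)))^2
              + Real.sqrt (4*α*x0)*(1 + Real.sqrt (Real.log (2*u/ε+1)))) := by
  obtain ⟨L, hLdef⟩ : ∃ L, L = Real.log (2*u/ε+1) := ⟨_, rfl⟩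
  have hL : 0 ≤ L := by
    rw [hLdef]
    apply Real.log_nonneg
    have : 0 ≤ 2*u/ε := by positivity
    linarith
  obtain ⟨a, hadef⟩ : ∃ a, a = 1 + Real.sqrt L := ⟨_, rfl⟩
  have ha1 : 1 ≤ a := by rw [hadef]; nlinarith [Real.sqrt_nonneg L]
  have ha0 : 0 < a := by linarith
  obtain ⟨q, hqdef⟩ : ∃ q, q = Real.sqrt (4*α*x0) := ⟨_, rfl⟩
  have hq0 : 0 ≤ q := hqdef ▸ Real.sqrt_nonneg _
  have hq2 : q^2 = 4*α*x0 := by rw [hqdef]; exact Real.sq_sqrt (by positivity)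
  obtain ⟨Sb, hSbdef⟩ : ∃ Sb, Sb = 4*α*k*a^2 + q*a := ⟨_, rfl⟩
  have hSb0 : 0 ≤ Sb := by rw [hSbdef]; positivity
  have hxb : 0 < x0 + k*Sb := by positivity
  have herfia : 2*u/ε + 1 ≤ erfi a := by
    have h1 := erfi_succ_ge (Real.sqrt_nonneg L)
    rw [Real.sq_sqrt hL, hLdef] at h1
    rw [Real.exp_log (by positivity)] at h1
    rw [hadef, hLdef, add_comm (1:ℝ) (Real.sqrt (Real.log (2*u/ε+1)))]
    exact h1
  have hεerfia : 2*u + ε ≤ ε * erfi a := by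
    have := mul_le_mul_of_nonneg_left herfia hε.le
    calc 2*u + ε = ε * (2*u/ε + 1) := by field_simp
      _ ≤ ε * erfi a := this
  -- the common final bound at Sb
  have hgoal_eq : 4*α*k*(1 + Real.sqrt (Real.log (2*u/ε+1)))^2
      + Real.sqrt (4*α*x0)*(1 + Real.sqrt (Real.log (2*u/ε+1))) = Sb := by
    rw [hSbdef, hadef, hqdef, hLdef]
  rw [hgoal_eq]
  have hboundSb : u * Sb - ε * Real.sqrt (α * (x0 + k*Sb)) *
      (2 * Ferfi (Sb/(2*Real.sqrt (α * (x0 + k*Sb)))) - 1)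
      ≤ ε * Real.sqrt (α * (x0 + k * Sb)) + u * Sb := by
    have := phi_lower ε α (x0 + k*Sb) Sb hε.le
    linarith
  rcases le_or_gt ST Sb with hcase | hcase
  · -- S_T ≤ Sb : direct bound
    have h1 : u * ST ≤ u * Sb := mul_le_mul_of_nonneg_left hcase hu
    have h2 : -(ε * Real.sqrt (α * (x0 + k*ST)) *
        (2 * Ferfi (ST/(2*Real.sqrt (α * (x0 + k*ST)))) - 1))
        ≤ ε * Real.sqrt (α * (x0 + k*ST)) := by
      have := phi_lower ε α (x0 + k*ST) ST hε.le
      linarith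
    have h3 : Real.sqrt (α * (x0 + k*ST)) ≤ Real.sqrt (α * (x0 + k*Sb)) := by
      apply Real.sqrt_le_sqrt
      have := mul_le_mul_of_nonneg_left hcase hk
      nlinarith
    nlinarith
  · -- Sb < S_T : use monotonicity of S ↦ u·S − Φ on [Sb, S_T]
    have hmono := le_of_hasDerivAt_nonpos
      (g := fun t => u * t - ε * Real.sqrt (α * (x0 + k*t)) *
          (2 * Ferfi (t/(2*Real.sqrt (α * (x0 + k*t)))) - 1))
      (g' := fun t => u * 1 - (-(ε * α * k * Real.exp ((t/(2*Real.sqrt (α * (x0 + k*t))))^2)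
          / (2 * Real.sqrt (α * (x0 + k*t))))
        + ε * 1 * erfi (t/(2*Real.sqrt (α * (x0 + k*t)))))) hcase.le
      (fun t ht => by
        have htpos : 0 ≤ t := le_trans hSb0 ht.1
        have hxt : 0 < x0 + k*t := by positivity
        have hX : HasDerivAt (fun t : ℝ => x0 + k*t) k t := by
          simpa using ((hasDerivAt_id t).const_mul k).const_add x0
        have hY : HasDerivAt (fun t : ℝ => t) 1 t := hasDerivAt_id t
        have hu' : HasDerivAt (fun t : ℝ => u * t) (u * 1) t := (hasDerivAt_id t).const_mul u
        exact hu'.sub (hasDerivAt_potential hα hX hxt hY))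
      (fun t ht => by
        have htpos : 0 < t := lt_of_le_of_lt hSb0 ht.1
        have hxt : 0 < x0 + k*t := by positivity
        have hrpos : 0 < Real.sqrt (α * (x0 + k*t)) := Real.sqrt_pos.2 (by positivity)
        have hr2 : (Real.sqrt (α * (x0 + k*t)))^2 = α * (x0 + k*t) :=
          Real.sq_sqrt (by positivity)
        obtain ⟨r, hrdef⟩ : ∃ r, r = Real.sqrt (α * (x0 + k*t)) := ⟨_, rfl⟩
        have hrpos' : 0 < r := hrdef ▸ hrpos
        have hr2' : r^2 = α * (x0 + k*t) := hrdef ▸ hr2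
        -- θ ≥ a
        have htSb : Sb ≤ t := ht.1.le
        have hqat : q * a ≤ t := by
          nlinarith [mul_nonneg (by positivity : (0:ℝ) ≤ 4*α*k) (sq_nonneg a)]
        have htsq : 4*a^2*(α*(x0 + k*t)) ≤ t^2 := by
          nlinarith [mul_le_mul_of_nonneg_right htSb htpos.le,
            mul_le_mul_of_nonneg_left hqat (mul_nonneg hq0 ha0.le)]
        have h2ar : 2*a*r ≤ t := by nlinarith [sq_nonneg (t - 2*a*r)]
        have hθa : a ≤ t/(2*r) := by
          rw [le_div_iff₀ (by positivity)]
          linarith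
        have hθ1 : 1 ≤ t/(2*r) := le_trans ha1 hθa
        have herfθ : erfi a ≤ erfi (t/(2*r)) := erfi_monotone hθa
        have hF1 : Real.exp ((t/(2*r))^2) / (2*(t/(2*r))) ≤ erfi (t/(2*r)) :=
          erfi_ge_exp_div hθ1
        -- negative term bound : ε·α·k·E/(2r) ≤ (ε/2)·E/(2θ)
        have hkt : α*k*t ≤ r^2 := by nlinarith
        have hE : 0 < Real.exp ((t/(2*r))^2) := Real.exp_pos _
        have hneg : ε * α * k * Real.exp ((t/(2*r))^2) / (2*r)
            ≤ (ε/2) * (Real.exp ((t/(2*r))^2) / (2*(t/(2*r)))) := by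
          have hrhs : (ε/2) * (Real.exp ((t/(2*r))^2) / (2*(t/(2*r))))
              = ε * Real.exp ((t/(2*r))^2) * r / (2*t) := by
            field_simp
          rw [hrhs, div_le_div_iff₀ (by positivity) (by positivity)]
          nlinarith [mul_le_mul_of_nonneg_left hkt
            (by positivity : (0:ℝ) ≤ 2 * ε * Real.exp ((t/(2*r))^2))]
        have h5 : (ε/2) * (Real.exp ((t/(2*r))^2) / (2*(t/(2*r)))) ≤ (ε/2) * erfi (t/(2*r)) :=
          mul_le_mul_of_nonneg_left hF1 (by positivity)
        have h6 : (ε/2) * erfi a ≤ (ε/2) * erfi (t/(2*r)) :=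
          mul_le_mul_of_nonneg_left herfθ (by positivity)
        have h7 : u + ε/2 ≤ (ε/2) * erfi a := by linarith
        show u * 1 - (-(ε * α * k * Real.exp ((t/(2*Real.sqrt (α * (x0 + k*t))))^2)
            / (2 * Real.sqrt (α * (x0 + k*t))))
          + ε * 1 * erfi (t/(2*Real.sqrt (α * (x0 + k*t))))) ≤ 0
        rw [show Real.sqrt (α * (x0 + k*t)) = r from hrdef.symm]
        nlinarith [hneg, h5, h6, h7])
    linarith [hmono, hboundSb]

/-- The shifted potential `Φ(V, S) = φ(V + z + k·S, S)`. -/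
noncomputable def PhiAux (ε α kk zz V S : ℝ) : ℝ :=
  ε * Real.sqrt (α * (V + zz + kk * S)) *
    (2 * Ferfi (S / (2 * Real.sqrt (α * (V + zz + kk * S)))) - 1)

lemma round_step (ε α ht kt zt V S c : ℝ) (hε : 0 < ε) (hα : 1/2 < α) (hh : 0 < ht)
    (hk : kt = 2*ht) (hzt : zt = (12*α+4)/(2*α-1)*ht^2) (hV : 0 ≤ V) (hS : -ht ≤ S)
    (hc : |c| ≤ ht) :
    PhiAux ε α kt zt (V + c^2) (S - c) ≤ PhiAux ε α kt zt V S - c * Dfun ε α kt zt V S := by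
  have hα0 : 0 < α := by linarith
  have ha1 : (0:ℝ) < 2*α-1 := by linarith
  have hz' : (2*α-1)*zt = (12*α+4)*ht^2 := by rw [hzt]; field_simp
  have h6 : 2*ht^2 < zt := by nlinarith [mul_pos hh hh]
  have hzpos : 0 < zt := by nlinarith [mul_pos hh hh]
  have hxpos : 0 < V + zt + kt*S := by
    rw [hk]
    nlinarith [mul_le_mul_of_nonneg_left hS (by linarith : (0:ℝ) ≤ 2*ht)]
  have hraw := one_step_raw ε α ht kt (V + zt) S hε hα hh hk
    (by nlinarith [hzt.symm.le] : (12*α+4)/(2*α-1)*ht^2 ≤ V + zt) hS hc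
  have harg1 : V + zt + kt*(S-c) + c^2 = V + c^2 + zt + kt*(S-c) := by ring
  have harg2 : V + zt + kt*(S-0) + 0^2 = V + zt + kt*S := by ring
  have harg3 : S - (0:ℝ) = S := sub_zero S
  rw [harg1, harg2, harg3] at hraw
  have hD : c * (-(ε * α * (2*0-kt) * Real.exp ((S / (2 * Real.sqrt (α * (V + zt + kt*S))))^2)
        / (2 * Real.sqrt (α * (V + zt + kt*S))))
      + ε * (-1) * erfi (S / (2 * Real.sqrt (α * (V + zt + kt*S)))))
      = -(c * Dfun ε α kt zt V S) := by
    rw [Dfun_eq ε α kt zt V S hα0 hxpos]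
    ring
  rw [hD] at hraw
  rw [PhiAux, PhiAux]
  linarith [hraw]

lemma between_step (ε α h1 h2 k1 k2 z1 z2 V S : ℝ) (hε : 0 ≤ ε) (hα : 1/2 < α)
    (hh1 : 0 < h1) (hh12 : h1 ≤ h2)
    (hk1 : k1 = 2*h1) (hk2 : k2 = 2*h2)
    (hz1 : z1 = (12*α+4)/(2*α-1)*h1^2) (hz2 : z2 = (12*α+4)/(2*α-1)*h2^2)
    (hV : 0 ≤ V) (hS : -h1 ≤ S) :
    PhiAux ε α k2 z2 V S ≤ PhiAux ε α k1 z1 V S := by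
  have hα0 : 0 < α := by linarith
  have ha1 : (0:ℝ) < 2*α-1 := by linarith
  have hz1' : (2*α-1) * z1 = (12*α+4)*h1^2 := by rw [hz1]; field_simp
  have hz2' : (2*α-1) * z2 = (12*α+4)*h2^2 := by rw [hz2]; field_simp
  have h6 : 2*h1^2 < z1 := by nlinarith [mul_pos hh1 hh1]
  have hx1pos : 0 < V + z1 + k1*S := by
    rw [hk1]
    nlinarith [mul_le_mul_of_nonneg_left hS (by linarith : (0:ℝ) ≤ 2*h1)]
  have hx12 : V + z1 + k1*S ≤ V + z2 + k2*S := by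
    rw [hk1, hk2]
    have hA := mul_le_mul_of_nonneg_left hS
      (mul_nonneg (by linarith : (0:ℝ) ≤ 2*(2*α-1)) (by linarith : (0:ℝ) ≤ h2-h1))
    have hP1 : 0 ≤ (h2-h1)*((12*α+4)*(h2+h1) - (4*α-2)*h1) :=
      mul_nonneg (by linarith) (by nlinarith)
    have hkey : 0 ≤ (2*α-1)*((V+z2+2*h2*S) - (V+z1+2*h1*S)) := by nlinarith [hP1, hA]
    nlinarith [hkey, ha1]
  exact phi_x_antitone ε α S _ _ hα0 hε hx1pos hx12

/-- Regret bound of the 1D base algorithm. -/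
theorem base_algorithm_regret (ε α : ℝ) (hε : 0 < ε) (hα : 1 / 2 < α)
    (h : ℕ → ℝ)
    (hpos : ∀ t, 1 ≤ t → 0 < h t)
    (hmono : ∀ t, 1 ≤ t → h t ≤ h (t + 1))
    (k z : ℕ → ℝ)
    (hk : ∀ t, k t = 2 * h t)
    (hz : ∀ t, z t = (12 * α + 4) / (2 * α - 1) * h t ^ 2)
    (ltil : ℕ → ℝ)
    (hl : ∀ t, 1 ≤ t → |ltil t| ≤ h t)
    (hlsum : ∀ t, 1 ≤ t → (∑ i ∈ Finset.Icc 1 t, ltil i) ≤ h t)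
    (Vtil Stil ytil : ℕ → ℝ)
    (hV : ∀ t, Vtil t = ∑ i ∈ Finset.Icc 1 t, ltil i ^ 2)
    (hS : ∀ t, Stil t = -∑ i ∈ Finset.Icc 1 t, ltil i)
    (hy : ∀ t, 1 ≤ t → ytil t = Dfun ε α (k t) (z t) (Vtil (t - 1)) (Stil (t - 1))) :
    ∀ T : ℕ, 1 ≤ T → ∀ util : ℝ, 0 ≤ util →
      (∑ t ∈ Finset.Icc 1 T, ltil t * (ytil t - util)) ≤
        ε * Real.sqrt (α * (Vtil T + z T + k T *
            (4 * α * k T * (1 + Real.sqrt (Real.log (2 * util / ε + 1))) ^ 2 +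
              Real.sqrt (4 * α * (Vtil T + z T)) *
                (1 + Real.sqrt (Real.log (2 * util / ε + 1))))))
          + util *
            (4 * α * k T * (1 + Real.sqrt (Real.log (2 * util / ε + 1))) ^ 2 +
              Real.sqrt (4 * α * (Vtil T + z T)) *
                (1 + Real.sqrt (Real.log (2 * util / ε + 1)))) := by
  have hα0 : 0 < α := by linarith
  have ha1 : (0:ℝ) < 2*α-1 := by linarith
  have hVnn : ∀ n, 0 ≤ Vtil n := fun n => by
    rw [hV]; exact Finset.sum_nonneg (fun i _ => sq_nonneg _)
  have hV0 : Vtil 0 = 0 := by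
    rw [hV, show Finset.Icc 1 0 = (∅ : Finset ℕ) from Finset.Icc_eq_empty (by omega),
      Finset.sum_empty]
  have hS0 : Stil 0 = 0 := by
    rw [hS, show Finset.Icc 1 0 = (∅ : Finset ℕ) from Finset.Icc_eq_empty (by omega),
      Finset.sum_empty, neg_zero]
  have hSlb : ∀ n, 1 ≤ n → -h n ≤ Stil n := fun n hn => by
    rw [hS]; linarith [hlsum n hn]
  have hzpos : ∀ n, 1 ≤ n → 0 < z n := fun n hn => by
    rw [hz n]
    exact mul_pos (div_pos (by linarith) ha1) (pow_pos (hpos n hn) 2)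
  have hround : ∀ t, 1 ≤ t →
      PhiAux ε α (k t) (z t) (Vtil t) (Stil t)
        ≤ PhiAux ε α (k t) (z t) (Vtil (t-1)) (Stil (t-1)) - ltil t * ytil t := by
    intro t ht
    obtain ⟨m, rfl⟩ : ∃ m, t = m + 1 := ⟨t - 1, by omega⟩
    simp only [Nat.add_sub_cancel]
    have hV1 : Vtil (m+1) = Vtil m + ltil (m+1)^2 := by
      rw [hV, hV, Finset.sum_Icc_succ_top (by omega : 1 ≤ m+1)]
    have hS1 : Stil (m+1) = Stil m - ltil (m+1) := by
      rw [hS, hS, Finset.sum_Icc_succ_top (by omega : 1 ≤ m+1)]; ring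
    have hSlb' : -h (m+1) ≤ Stil m := by
      rcases Nat.eq_zero_or_pos m with hm | hm
      · subst hm; rw [hS0]; linarith [hpos 1 le_rfl]
      · calc -h (m+1) ≤ -h m := by linarith [hmono m hm]
          _ ≤ Stil m := hSlb m hm
    have hy' : ytil (m+1) = Dfun ε α (k (m+1)) (z (m+1)) (Vtil m) (Stil m) := by
      have := hy (m+1) (by omega)
      simpa using this
    rw [hV1, hS1, hy']
    exact round_step ε α (h (m+1)) (k (m+1)) (z (m+1)) (Vtil m) (Stil m) (ltil (m+1))
      hε hα (hpos (m+1) (by omega)) (hk (m+1)) (hz (m+1)) (hVnn m) hSlb' (hl (m+1) (by omega))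
  have key : ∀ T, 1 ≤ T → (∑ t ∈ Finset.Icc 1 T, ltil t * ytil t)
      + PhiAux ε α (k T) (z T) (Vtil T) (Stil T) ≤ 0 := by
    intro T
    induction T with
    | zero => omega
    | succ n ih =>
      intro _
      by_cases hn : 1 ≤ n
      · have hstep := hround (n+1) (by omega)
        simp only [Nat.add_sub_cancel] at hstep
        have hbtw := between_step ε α (h n) (h (n+1)) (k n) (k (n+1)) (z n) (z (n+1))
          (Vtil n) (Stil n) hε.le hα (hpos n hn) (hmono n hn) (hk n) (hk (n+1))
          (hz n) (hz (n+1)) (hVnn n) (hSlb n hn)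
        have hsum : (∑ t ∈ Finset.Icc 1 (n+1), ltil t * ytil t)
            = (∑ t ∈ Finset.Icc 1 n, ltil t * ytil t) + ltil (n+1) * ytil (n+1) :=
          Finset.sum_Icc_succ_top (by omega) _
        have hih := ih hn
        rw [hsum]
        linarith [hstep, hbtw, hih]
      · have hn0 : n = 0 := by omega
        subst hn0
        have hstep := hround 1 le_rfl
        norm_num at hstep
        rw [hV0, hS0] at hstep
        have hPhi0 : PhiAux ε α (k 1) (z 1) 0 0 ≤ 0 := by
          rw [PhiAux]
          rw [show (0:ℝ) / (2 * Real.sqrt (α * (0 + z 1 + k 1 * 0))) = 0 from zero_div _,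
            Ferfi_zero]
          have h0 : 0 ≤ ε * Real.sqrt (α * (0 + z 1 + k 1 * 0)) := by positivity
          nlinarith
        rw [show Finset.Icc 1 1 = {1} from Finset.Icc_self 1, Finset.sum_singleton]
        linarith [hstep, hPhi0]
  intro T hT util hu
  have hzT := hzpos T hT
  have hz' : (2*α-1) * z T = (12*α+4) * h T^2 := by rw [hz T]; field_simp
  have hVz : 0 < Vtil T + z T := by linarith [hVnn T]
  have hxT : 0 < Vtil T + z T + k T * Stil T := by
    rw [hk T]
    have h6 : 2*(h T)^2 < z T := by nlinarith [mul_pos (hpos T hT) (hpos T hT)]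
    nlinarith [mul_le_mul_of_nonneg_left (hSlb T hT)
      (by linarith [hpos T hT] : (0:ℝ) ≤ 2 * h T), hVnn T]
  have hsum_eq : (∑ t ∈ Finset.Icc 1 T, ltil t * (ytil t - util))
      = (∑ t ∈ Finset.Icc 1 T, ltil t * ytil t) + util * Stil T := by
    rw [hS, show (∑ t ∈ Finset.Icc 1 T, ltil t * (ytil t - util))
        = ∑ t ∈ Finset.Icc 1 T, (ltil t * ytil t - util * ltil t) from
      Finset.sum_congr rfl (fun t _ => by ring), Finset.sum_sub_distrib,
      ← Finset.mul_sum]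
    ring
  have hkey := key T hT
  simp only [PhiAux] at hkey
  have hconj := conjugate_bound ε α (k T) util (Vtil T + z T) (Stil T) hε hα0
    (by rw [hk T]; linarith [hpos T hT]) hVz hxT hu
  rw [hsum_eq]
  linarith [hkey, hconj]
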